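/- The assignments S ↦ S ∩ M and T ↦ (topological closure of T in E) are mutually inverse, inclusion-preserving bijections between the set of closed π-invariant K-subspaces S of E and the set of π-invariant K-subspaces T of M. In particular, every closed π-invariant subspace S of E satisfies S = closure(S ∩ M), and every π-invariant subspace T of M satisfies closure(T) ∩ M = T. -/

import Mathlib

/-- Elements of the sum of ranges have finite support under the projections. -/
lemma aux_finsupp {K : Type*} [NontriviallyNormedField K]
    {E : Type*} [NormedAddCommGroup E] [NormedSpace K E] {ι : Type*}
    (π : ι → E →L[K] E)
    (horth : ∀ i j, i ≠ j → (π i).comp (π j) = 0)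
    {x : E} (hx : x ∈ ⨆ j, LinearMap.range (π j : E →ₗ[K] E)) :
    ∃ F : Finset ι, ∀ i ∉ F, π i x = 0 := by
  classical
  refine Submodule.iSup_induction (motive := fun x => ∃ F : Finset ι, ∀ i ∉ F, π i x = 0)
    (fun j => LinearMap.range (π j : E →ₗ[K] E)) hx ?_ ?_ ?_
  · rintro j x ⟨z, rfl⟩
    refine ⟨{j}, fun i hi => ?_⟩
    have : (π i).comp (π j) = 0 := horth i j (by simpa using hi)
    simpa using congrArg (fun f => f z) this
  · exact ⟨∅, fun i _ => by simp⟩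
  · rintro x y ⟨F, hF⟩ ⟨G, hG⟩
    refine ⟨F ∪ G, fun i hi => ?_⟩
    simp only [Finset.mem_union, not_or] at hi
    simp [map_add, hF i hi.1, hG i hi.2]

/-- Let `E` be a normed space over a complete nontrivially normed field `K`, and let
`(π_i)` be a family of continuous idempotent, mutually orthogonal, finite-rank linear
projections on `E` with `∑_i π_i x = x` (summable) for all `x`. Let `M = ∑_i range(π_i)`.
Then `S ↦ S ∩ M` and `T ↦ closure(T)` are mutually inverse, inclusion-preserving
bijections between closed `π`-invariant subspaces of `E` and `π`-invariant subspaces of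
`M`: the two assignments are well defined (`S ∩ M` is `π`-invariant and contained in `M`;
`closure T` is closed and `π`-invariant) and every closed `π`-invariant `S` satisfies
`closure(S ∩ M) = S`, while every `π`-invariant `T ⊆ M` satisfies `closure(T) ∩ M = T`. -/
theorem stmt_8 {K : Type*} [NontriviallyNormedField K] [CompleteSpace K]
    {E : Type*} [NormedAddCommGroup E] [NormedSpace K E] {ι : Type*}
    (π : ι → E →L[K] E)
    (hidem : ∀ i, (π i).comp (π i) = π i)
    (horth : ∀ i j, i ≠ j → (π i).comp (π j) = 0)
    (hfd : ∀ i, FiniteDimensional K (LinearMap.range (π i : E →ₗ[K] E)))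
    (hsum : ∀ x : E, HasSum (fun i => (π i) x) x) :
    (∀ S : Submodule K E, IsClosed (S : Set E) → (∀ i, ∀ x ∈ S, π i x ∈ S) →
        ((∀ i, ∀ x ∈ S ⊓ ⨆ j, LinearMap.range (π j : E →ₗ[K] E), π i x ∈ S ⊓ ⨆ j, LinearMap.range (π j : E →ₗ[K] E)) ∧
          (S ⊓ ⨆ j, LinearMap.range (π j : E →ₗ[K] E)).topologicalClosure = S)) ∧
      (∀ T : Submodule K E, T ≤ (⨆ j, LinearMap.range (π j : E →ₗ[K] E)) → (∀ i, ∀ x ∈ T, π i x ∈ T) →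
        ((∀ i, ∀ x ∈ T.topologicalClosure, π i x ∈ T.topologicalClosure) ∧
          T.topologicalClosure ⊓ (⨆ j, LinearMap.range (π j : E →ₗ[K] E)) = T)) := by
  have hrange : ∀ i, LinearMap.range (π i : E →ₗ[K] E) ≤ ⨆ j, LinearMap.range (π j : E →ₗ[K] E) :=
    fun i => le_iSup (fun j => LinearMap.range (π j : E →ₗ[K] E)) i
  constructor
  · intro S hSclosed hSinv
    constructor
    · intro i x hx
      exact ⟨hSinv i x hx.1, hrange i ⟨x, rfl⟩⟩
    · refine le_antisymm (Submodule.topologicalClosure_minimal _ inf_le_left hSclosed) ?_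
      intro x hx
      have hmem : ∀ F : Finset ι, (∑ i ∈ F, π i x) ∈
          (S ⊓ ⨆ j, LinearMap.range (π j : E →ₗ[K] E) : Submodule K E) := by
        intro F
        refine Submodule.sum_mem _ fun i _ => ⟨hSinv i x hx, hrange i ⟨x, rfl⟩⟩
      exact mem_closure_of_tendsto (hsum x) (Filter.Eventually.of_forall hmem)
  · intro T hTle hTinv
    have key : ∀ i, ∀ x ∈ T.topologicalClosure, π i x ∈ T ⊓ LinearMap.range (π i : E →ₗ[K] E) := by
      intro i x hx
      haveI := hfd i
      haveI : FiniteDimensional K ↥(T ⊓ LinearMap.range (π i : E →ₗ[K] E)) :=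
        Submodule.finiteDimensional_of_le inf_le_right
      have hclosed : IsClosed ((T ⊓ LinearMap.range (π i : E →ₗ[K] E) : Submodule K E) : Set E) :=
        Submodule.closed_of_finiteDimensional _
      have hmaps : Set.MapsTo (π i) (T : Set E)
          ((T ⊓ LinearMap.range (π i : E →ₗ[K] E) : Submodule K E) : Set E) :=
        fun y hy => ⟨hTinv i y hy, ⟨y, rfl⟩⟩
      have := map_mem_closure (π i).continuous hx hmaps
      rwa [hclosed.closure_eq] at this
    constructor
    · intro i x hx
      exact T.le_topologicalClosure (key i x hx).1
    · refine le_antisymm ?_ (le_inf T.le_topologicalClosure hTle)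
      rintro x ⟨hx1, hx2⟩
      obtain ⟨F, hF⟩ := aux_finsupp π horth hx2
      have hx_eq : x = ∑ i ∈ F, π i x :=
        (hsum x).unique (hasSum_sum_of_ne_finset_zero hF)
      rw [hx_eq]
      exact Submodule.sum_mem _ fun i _ => (key i x hx1).1
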